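/- Let 1 ≤ r ≤ d ≤ n, let L ∈ ℝ^{n×d} have rank d (full column rank), and set K = L Lᵀ. Let γ > 0, τ, τ_z ∈ ℝ, L_Y ∈ ℝ^{n×d_Y}, L_S ∈ ℝ^{n×d_S}, Z_O ∈ ℝ^{n×r'}, and set K_Y = L_Y L_Yᵀ, K_S = L_S L_Sᵀ, B = Lᵀ (H K_Y H − τ·H K_S H + τ_z·H Z_O Z_Oᵀ H) L, C = (1/n)·Lᵀ H L + γ·I_d, and M = C^{-1/2} B C^{-1/2}. Then the supremum of ‖Θ K H L_Y‖_F² − τ·‖Θ K H L_S‖_F² + τ_z·‖Θ K H Z_O‖_F² over all Θ ∈ ℝ^{r×n} satisfying (1/n)·Θ K H K Θᵀ + γ·Θ K Θᵀ = I_r equals Σ_{j=1}^r λ_j(M), the sum of the r largest eigenvalues of M, and this supremum is attained by some Θ. -/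

import Mathlib

open Matrix BigOperators

/-- The centering matrix `H = I_n - (1/n) 1_n 1_nᵀ`. -/
noncomputable def centering (n : ℕ) : Matrix (Fin n) (Fin n) ℝ :=
  1 - (n : ℝ)⁻¹ • Matrix.of (fun _ _ => (1 : ℝ))

/-- The squared Frobenius norm `‖M‖_F² = ∑ᵢⱼ Mᵢⱼ²`. -/
noncomputable def frobSq {m n : ℕ} (M : Matrix (Fin m) (Fin n) ℝ) : ℝ :=
  ∑ i, ∑ j, (M i j) ^ 2

/-- The old Mathlib `Matrix.PosSemidef.sqrt` (Dec 2024), spelled out. -/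
noncomputable def psdSqrtOld {d : ℕ} {C : Matrix (Fin d) (Fin d) ℝ} (hC : C.IsHermitian) :
    Matrix (Fin d) (Fin d) ℝ :=
  hC.eigenvectorUnitary.1 * diagonal (Real.sqrt ∘ hC.eigenvalues) *
    (star hC.eigenvectorUnitary : Matrix (Fin d) (Fin d) ℝ)


lemma frobSq_eq_trace {m k : ℕ} (X : Matrix (Fin m) (Fin k) ℝ) :
    frobSq X = Matrix.trace (X * Xᵀ) := by
  simp [frobSq, Matrix.trace, Matrix.diag, Matrix.mul_apply, sq]

lemma centering_symm (n : ℕ) : (centering n)ᵀ = centering n := by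
  simp [centering, Matrix.transpose_smul]
  ext i j
  simp [Matrix.transpose_apply]

lemma sum_mul_le_top {d r : ℕ} (hr : 1 ≤ r) (hrd : r ≤ d) (μ t : Fin d → ℝ)
    (hμ : Antitone μ) (ht0 : ∀ i, 0 ≤ t i) (ht1 : ∀ i, t i ≤ 1)
    (hts : ∑ i, t i = r) :
    ∑ i, μ i * t i ≤ ∑ j : Fin r, μ (Fin.castLE hrd j) := by
  have hrd' : r - 1 < d := lt_of_lt_of_le (Nat.sub_lt hr one_pos) hrd
  set c : ℝ := μ ⟨r - 1, hrd'⟩ with hc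
  set A : Finset (Fin d) := (Finset.univ : Finset (Fin r)).map (Fin.castLEEmb hrd) with hA
  have hmemA : ∀ i : Fin d, i ∈ A ↔ (i : ℕ) < r := by
    intro i
    simp only [hA, Finset.mem_map, Finset.mem_univ, true_and, Fin.castLEEmb_apply]
    constructor
    · rintro ⟨j, rfl⟩; exact j.isLt
    · intro h; exact ⟨⟨i, h⟩, rfl⟩
  have hcardA : A.card = r := by simp [hA]
  have hsumA : ∀ f : Fin d → ℝ, ∑ i ∈ A, f i = ∑ j : Fin r, f (Fin.castLE hrd j) := by
    intro f; simp [hA, Finset.sum_map]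
  have key : ∀ i : Fin d, μ i * t i ≤ (if i ∈ A then μ i else 0) + c * (t i - (if i ∈ A then 1 else 0)) := by
    intro i
    by_cases h : i ∈ A
    · simp only [h, if_true]
      have hi : (i : ℕ) < r := (hmemA i).1 h
      have h1 : c ≤ μ i := by
        apply hμ; rw [Fin.le_def]; simp only []; omega
      nlinarith [mul_nonneg (sub_nonneg.2 h1) (sub_nonneg.2 (ht1 i))]
    · simp only [h, if_false]
      have hi : r ≤ (i : ℕ) := le_of_not_gt (fun hc' => h ((hmemA i).2 hc'))
      have h2 : μ i ≤ c := by
        apply hμ; rw [Fin.le_def]; simp only []; omega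
      nlinarith [mul_nonneg (sub_nonneg.2 h2) (ht0 i)]
  have e1 : ∑ i : Fin d, (if i ∈ A then μ i else 0) = ∑ i ∈ A, μ i := by
    simp [Finset.sum_ite_mem]
  have e2 : ∑ i : Fin d, (if i ∈ A then (1:ℝ) else 0) = (A.card : ℝ) := by
    simp [Finset.sum_ite_mem]
  calc ∑ i, μ i * t i
      ≤ ∑ i : Fin d, ((if i ∈ A then μ i else 0) + c * (t i - (if i ∈ A then 1 else 0))) :=
        Finset.sum_le_sum fun i _ => key i
    _ = (∑ i : Fin d, (if i ∈ A then μ i else 0))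
        + c * ((∑ i, t i) - ∑ i : Fin d, (if i ∈ A then (1:ℝ) else 0)) := by
        rw [Finset.sum_add_distrib, ← Finset.mul_sum, Finset.sum_sub_distrib]
    _ = ∑ j : Fin r, μ (Fin.castLE hrd j) := by
        rw [e1, e2, hts, hcardA, hsumA]; ring

section KyFan
variable {d r : ℕ}

lemma trace_mul_diag_trans (V : Matrix (Fin r) (Fin d) ℝ) (e : Fin d → ℝ) :
    Matrix.trace (V * diagonal e * Vᵀ) = ∑ i, e i * (Vᵀ * V) i i := by
  rw [Matrix.trace_mul_comm, ← Matrix.mul_assoc]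
  simp only [Matrix.trace, Matrix.diag, Matrix.mul_diagonal]
  exact Finset.sum_congr rfl fun i _ => mul_comm _ _

lemma grams (V : Matrix (Fin r) (Fin d) ℝ) (hV : V * Vᵀ = 1) :
    (∀ i, 0 ≤ (Vᵀ * V) i i) ∧ (∀ i, (Vᵀ * V) i i ≤ 1) ∧ Matrix.trace (Vᵀ * V) = r := by
  have hproj : (Vᵀ * V) * (Vᵀ * V) = Vᵀ * V := by
    calc Vᵀ * V * (Vᵀ * V) = Vᵀ * (V * Vᵀ) * V := by simp only [Matrix.mul_assoc]
    _ = Vᵀ * V := by rw [hV]; simp [Matrix.mul_assoc]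
  have h0 : ∀ i, 0 ≤ (Vᵀ * V) i i := by
    intro i
    rw [Matrix.mul_apply]
    exact Finset.sum_nonneg fun k _ => by simp [Matrix.transpose_apply]; exact mul_self_nonneg _
  refine ⟨h0, fun i => ?_, ?_⟩
  · have hsq : (Vᵀ * V) i i ^ 2 ≤ (Vᵀ * V) i i := by
      conv_rhs => rw [← hproj, Matrix.mul_apply]
      have : ∀ j, ((Vᵀ * V) i j) * ((Vᵀ * V) j i) = ((Vᵀ * V) i j)^2 := by
        intro j
        have hsymm : (Vᵀ * V) j i = (Vᵀ * V) i j := by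
          rw [Matrix.mul_apply, Matrix.mul_apply]
          simp [Matrix.transpose_apply, mul_comm]
        rw [hsymm]; ring
      rw [Finset.sum_congr rfl fun j _ => this j]
      exact (Finset.single_le_sum (fun j _ => sq_nonneg ((Vᵀ * V) i j)) (Finset.mem_univ i))
    nlinarith [h0 i]
  · rw [Matrix.trace_mul_comm, hV]; simp


lemma kyfan_le (hr : 1 ≤ r) (hrd : r ≤ d)
    (M : Matrix (Fin d) (Fin d) ℝ) (hM : M.IsHermitian)
    (μ : Fin d → ℝ) (hμ : Antitone μ)
    (σ : Equiv.Perm (Fin d)) (hσ : ∀ i, μ i = hM.eigenvalues (σ i))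
    (W : Matrix (Fin r) (Fin d) ℝ) (hW : W * Wᵀ = 1) :
    Matrix.trace (W * M * Wᵀ) ≤ ∑ j : Fin r, μ (Fin.castLE hrd j) := by
  set U : Matrix (Fin d) (Fin d) ℝ := (hM.eigenvectorUnitary : Matrix (Fin d) (Fin d) ℝ) with hU
  have hUU' : U * Uᵀ = 1 := by
    have := (Matrix.mem_unitaryGroup_iff).mp (hM.eigenvectorUnitary).2
    simpa [hU, Matrix.star_eq_conjTranspose, Matrix.conjTranspose_eq_transpose_of_trivial] using this
  have hspec : M = U * diagonal hM.eigenvalues * Uᵀ := by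
    have := hM.spectral_theorem
    simpa [hU, Matrix.star_eq_conjTranspose, Matrix.conjTranspose_eq_transpose_of_trivial] using this
  set V : Matrix (Fin r) (Fin d) ℝ := W * U with hVdef
  have hVVt : V * Vᵀ = 1 := by
    rw [hVdef, Matrix.transpose_mul]
    calc W * U * (Uᵀ * Wᵀ) = W * (U * Uᵀ) * Wᵀ := by simp only [Matrix.mul_assoc]
    _ = 1 := by rw [hUU']; simpa [Matrix.mul_assoc] using hW
  have htr : W * M * Wᵀ = V * diagonal hM.eigenvalues * Vᵀ := by
    conv_lhs => rw [hspec]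
    rw [hVdef, Matrix.transpose_mul]
    simp only [Matrix.mul_assoc]
  obtain ⟨h0, h1, htrV⟩ := grams V hVVt
  have : Matrix.trace (W * M * Wᵀ) = ∑ i, hM.eigenvalues i * (Vᵀ * V) i i := by
    rw [htr, trace_mul_diag_trans]
  rw [this]
  have hre : ∑ i, hM.eigenvalues i * (Vᵀ * V) i i
      = ∑ i, μ i * (Vᵀ * V) (σ i) (σ i) := by
    rw [← Equiv.sum_comp σ (fun i => hM.eigenvalues i * (Vᵀ * V) i i)]
    exact Finset.sum_congr rfl fun i _ => by rw [hσ i]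
  rw [hre]
  refine sum_mul_le_top hr hrd μ (fun i => (Vᵀ * V) (σ i) (σ i)) hμ
    (fun i => h0 (σ i)) (fun i => h1 (σ i)) ?_
  rw [Equiv.sum_comp σ (fun i => (Vᵀ * V) i i)]
  exact htrV

lemma kyfan_attain (hr : 1 ≤ r) (hrd : r ≤ d)
    (M : Matrix (Fin d) (Fin d) ℝ) (hM : M.IsHermitian)
    (μ : Fin d → ℝ)
    (σ : Equiv.Perm (Fin d)) (hσ : ∀ i, μ i = hM.eigenvalues (σ i)) :
    ∃ W : Matrix (Fin r) (Fin d) ℝ, W * Wᵀ = 1 ∧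
      Matrix.trace (W * M * Wᵀ) = ∑ j : Fin r, μ (Fin.castLE hrd j) := by
  set U : Matrix (Fin d) (Fin d) ℝ := (hM.eigenvectorUnitary : Matrix (Fin d) (Fin d) ℝ) with hU
  have hU'U : Uᵀ * U = 1 := by
    have := (Matrix.mem_unitaryGroup_iff').mp (hM.eigenvectorUnitary).2
    simpa [hU, Matrix.star_eq_conjTranspose, Matrix.conjTranspose_eq_transpose_of_trivial] using this
  have hdiag : Uᵀ * M * U = diagonal hM.eigenvalues := by
    have := hM.conjStarAlgAut_star_eigenvectorUnitary
    simpa [hU, Unitary.conjStarAlgAut_apply, Matrix.star_eq_conjTranspose, Matrix.conjTranspose_eq_transpose_of_trivial, Matrix.mul_assoc] using this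
  set f : Fin r → Fin d := fun j => σ (Fin.castLE hrd j) with hf
  have hfinj : Function.Injective f :=
    fun a b hab => Fin.castLE_injective hrd (σ.injective hab)
  refine ⟨Uᵀ.submatrix f id, ?_, ?_⟩
  · have : Uᵀ.submatrix f id * (Uᵀ.submatrix f id)ᵀ = (Uᵀ * U).submatrix f f := by
      rw [Matrix.transpose_submatrix, Matrix.transpose_transpose]
      have := Matrix.submatrix_mul Uᵀ U f (id : Fin d → Fin d) f Function.bijective_id
      rw [this]
    rw [this, hU'U]
    ext j k
    simp [Matrix.submatrix_apply, Matrix.one_apply, hfinj.eq_iff]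
  · have key : Uᵀ.submatrix f id * M * (Uᵀ.submatrix f id)ᵀ
        = (diagonal hM.eigenvalues).submatrix f f := by
      rw [Matrix.transpose_submatrix, Matrix.transpose_transpose, ← hdiag]
      have h1 := Matrix.submatrix_mul (Uᵀ * M) U f (id : Fin d → Fin d) f Function.bijective_id
      have h2 := Matrix.submatrix_mul Uᵀ M f (id : Fin d → Fin d) (id : Fin d → Fin d) Function.bijective_id
      rw [h1, h2, Matrix.submatrix_id_id]
    rw [key]
    simp only [Matrix.trace, Matrix.diag, Matrix.submatrix_apply, Matrix.diagonal_apply_eq]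
    exact Finset.sum_congr rfl fun j _ => (hσ (Fin.castLE hrd j)).symm

end KyFan

/-- Theorem 1: the supremum of the debiasing objective over the disentanglement
constraint set equals the sum of the `r` largest eigenvalues of
`M = C^{-1/2} B C^{-1/2}` (the solutions of the generalized eigenvalue problem
`B u = λ C u`), and it is attained. -/
theorem stmt_10 (n d r dY dS r' : ℕ) (hr : 1 ≤ r) (hrd : r ≤ d) (hdn : d ≤ n)
    (L : Matrix (Fin n) (Fin d) ℝ) (hL : L.rank = d)
    (γ : ℝ) (hγ : 0 < γ) (τ τz : ℝ)
    (LY : Matrix (Fin n) (Fin dY) ℝ) (LS : Matrix (Fin n) (Fin dS) ℝ)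
    (ZO : Matrix (Fin n) (Fin r') ℝ)
    (K : Matrix (Fin n) (Fin n) ℝ) (hK : K = L * Lᵀ)
    (KY : Matrix (Fin n) (Fin n) ℝ) (hKY : KY = LY * LYᵀ)
    (KS : Matrix (Fin n) (Fin n) ℝ) (hKS : KS = LS * LSᵀ)
    (B : Matrix (Fin d) (Fin d) ℝ)
    (hB : B = Lᵀ * (centering n * KY * centering n - τ • (centering n * KS * centering n)
        + τz • (centering n * (ZO * ZOᵀ) * centering n)) * L)
    (C : Matrix (Fin d) (Fin d) ℝ)
    (hC : C = (n : ℝ)⁻¹ • (Lᵀ * centering n * L) + γ • (1 : Matrix (Fin d) (Fin d) ℝ))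
    (hCpd : C.PosDef)
    (M : Matrix (Fin d) (Fin d) ℝ)
    (hMdef : M = (psdSqrtOld hCpd.posSemidef.1)⁻¹ * B * (psdSqrtOld hCpd.posSemidef.1)⁻¹)
    (hM : M.IsHermitian)
    (μ : Fin d → ℝ) (hμ : Antitone μ)
    (hperm : ∃ σ : Equiv.Perm (Fin d), ∀ i, μ i = hM.eigenvalues (σ i)) :
    IsGreatest
      {x : ℝ | ∃ Θ : Matrix (Fin r) (Fin n) ℝ,
        ((n : ℝ)⁻¹ • (Θ * K * centering n * K * Θᵀ) + γ • (Θ * K * Θᵀ)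
            = (1 : Matrix (Fin r) (Fin r) ℝ)) ∧
        x = frobSq (Θ * K * centering n * LY) - τ * frobSq (Θ * K * centering n * LS)
              + τz * frobSq (Θ * K * centering n * ZO)}
      (∑ j : Fin r, μ (Fin.castLE hrd j)) := by
  obtain ⟨σ, hσ⟩ := hperm
  set S : Matrix (Fin d) (Fin d) ℝ := psdSqrtOld hCpd.posSemidef.1 with hSdef
  have hS2 : S * S = C := by
    have hUU : (star hCpd.posSemidef.1.eigenvectorUnitary : Matrix (Fin d) (Fin d) ℝ)
        * hCpd.posSemidef.1.eigenvectorUnitary.1 = 1 :=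
      (Matrix.mem_unitaryGroup_iff').mp hCpd.posSemidef.1.eigenvectorUnitary.2
    have hdd : diagonal (Real.sqrt ∘ hCpd.posSemidef.1.eigenvalues)
        * diagonal (Real.sqrt ∘ hCpd.posSemidef.1.eigenvalues)
        = diagonal hCpd.posSemidef.1.eigenvalues := by
      rw [diagonal_mul_diagonal]; congr 1; funext i
      exact Real.mul_self_sqrt (le_of_lt (hCpd.eigenvalues_pos i))
    calc S * S = hCpd.posSemidef.1.eigenvectorUnitary.1
          * (diagonal (Real.sqrt ∘ hCpd.posSemidef.1.eigenvalues)
          * ((star hCpd.posSemidef.1.eigenvectorUnitary : Matrix (Fin d) (Fin d) ℝ)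
            * hCpd.posSemidef.1.eigenvectorUnitary.1)
          * diagonal (Real.sqrt ∘ hCpd.posSemidef.1.eigenvalues))
          * (star hCpd.posSemidef.1.eigenvectorUnitary : Matrix (Fin d) (Fin d) ℝ) := by
          simp only [hSdef, psdSqrtOld, Matrix.mul_assoc]
      _ = hCpd.posSemidef.1.eigenvectorUnitary.1 * diagonal hCpd.posSemidef.1.eigenvalues
          * (star hCpd.posSemidef.1.eigenvectorUnitary : Matrix (Fin d) (Fin d) ℝ) := by
          rw [hUU, Matrix.mul_one, hdd]
      _ = C := by
          have := hCpd.posSemidef.1.spectral_theorem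
          simpa [Unitary.conjStarAlgAut_apply, Matrix.star_eq_conjTranspose,
            Matrix.conjTranspose_eq_transpose_of_trivial] using this.symm
  have hSsym : Sᵀ = S := by
    simp [hSdef, psdSqrtOld, Matrix.transpose_mul, Matrix.star_eq_conjTranspose,
      Matrix.conjTranspose_eq_transpose_of_trivial, Matrix.mul_assoc]
  have hSdetu : IsUnit S.det := by
    have h2 : S.det * S.det = C.det := by rw [← Matrix.det_mul, hS2]
    have h3 := hCpd.det_pos
    apply isUnit_iff_ne_zero.mpr
    intro h; rw [h] at h2; simp at h2; rw [← h2] at h3; exact lt_irrefl _ h3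
  have hSS' : S * S⁻¹ = 1 := Matrix.mul_nonsing_inv S hSdetu
  have hS'S : S⁻¹ * S = 1 := Matrix.nonsing_inv_mul S hSdetu
  have hSiT : (S⁻¹)ᵀ = S⁻¹ := by rw [Matrix.transpose_nonsing_inv, hSsym]
  -- constraint reduction
  have hconstr : ∀ Θ : Matrix (Fin r) (Fin n) ℝ,
      (n : ℝ)⁻¹ • (Θ * K * centering n * K * Θᵀ) + γ • (Θ * K * Θᵀ)
      = (Θ * L) * C * (Θ * L)ᵀ := by
    intro Θ
    rw [hC, hK]
    simp only [Matrix.mul_add, Matrix.add_mul, Matrix.mul_smul, Matrix.smul_mul,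
      Matrix.mul_one, Matrix.transpose_mul, Matrix.mul_assoc]
  -- objective reduction
  have hobj : ∀ Θ : Matrix (Fin r) (Fin n) ℝ,
      frobSq (Θ * K * centering n * LY) - τ * frobSq (Θ * K * centering n * LS)
        + τz * frobSq (Θ * K * centering n * ZO)
      = Matrix.trace ((Θ * L) * B * (Θ * L)ᵀ) := by
    intro Θ
    rw [frobSq_eq_trace, frobSq_eq_trace, frobSq_eq_trace, hB, hK, hKY, hKS]
    simp only [Matrix.transpose_mul, Matrix.transpose_transpose, centering_symm,
      Matrix.mul_sub, Matrix.sub_mul, Matrix.mul_add, Matrix.add_mul,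
      Matrix.mul_smul, Matrix.smul_mul, Matrix.trace_add, Matrix.trace_sub,
      Matrix.trace_smul, smul_eq_mul, Matrix.mul_assoc]
  -- A*C*Aᵀ = (A*S)*(A*S)ᵀ
  have hACA : ∀ A : Matrix (Fin r) (Fin d) ℝ, A * C * Aᵀ = (A * S) * (A * S)ᵀ := by
    intro A
    rw [Matrix.transpose_mul, hSsym, ← hS2]
    simp only [Matrix.mul_assoc]
  -- trace(A*B*Aᵀ) = trace((A*S)*M*(A*S)ᵀ)
  have hWM : ∀ A : Matrix (Fin r) (Fin d) ℝ, (A * S) * M * (A * S)ᵀ = A * B * Aᵀ := by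
    intro A
    rw [hMdef, Matrix.transpose_mul, hSsym]
    calc A * S * (S⁻¹ * B * S⁻¹) * (S * Aᵀ)
        = A * ((S * S⁻¹) * B * (S⁻¹ * S)) * Aᵀ := by simp only [Matrix.mul_assoc]
      _ = A * B * Aᵀ := by rw [hSS', hS'S, Matrix.one_mul, Matrix.mul_one]
  constructor
  · -- membership
    obtain ⟨W, hWW, hWtr⟩ := kyfan_attain hr hrd M hM μ σ hσ
    have hGdetu : IsUnit (Lᵀ * L).det := by
      have hGrank : (Lᵀ * L).rank = d := by rw [Matrix.rank_transpose_mul_self, hL]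
      have hsurj : Function.Surjective (Lᵀ * L).mulVec := by
        have hrange : LinearMap.range (Lᵀ * L).mulVecLin = ⊤ := by
          apply Submodule.eq_top_of_finrank_eq
          rw [← Matrix.rank, hGrank]
          simp [Module.finrank_pi]
        exact fun y => LinearMap.range_eq_top.mp hrange y
      exact (Matrix.isUnit_iff_isUnit_det _).mp
        (Matrix.mulVec_surjective_iff_isUnit.mp hsurj)
    set A : Matrix (Fin r) (Fin d) ℝ := W * S⁻¹ with hAdef
    refine ⟨A * (Lᵀ * L)⁻¹ * Lᵀ, ?_, ?_⟩
    · have hΘL : (A * (Lᵀ * L)⁻¹ * Lᵀ) * L = A := by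
        calc A * (Lᵀ * L)⁻¹ * Lᵀ * L = A * ((Lᵀ * L)⁻¹ * (Lᵀ * L)) := by
              simp only [Matrix.mul_assoc]
          _ = A := by rw [Matrix.nonsing_inv_mul _ hGdetu, Matrix.mul_one]
      rw [hconstr, hΘL, hACA]
      have hAS : A * S = W := by
        rw [hAdef, Matrix.mul_assoc, hS'S, Matrix.mul_one]
      rw [hAS, hWW]
    · have hΘL : (A * (Lᵀ * L)⁻¹ * Lᵀ) * L = A := by
        calc A * (Lᵀ * L)⁻¹ * Lᵀ * L = A * ((Lᵀ * L)⁻¹ * (Lᵀ * L)) := by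
              simp only [Matrix.mul_assoc]
          _ = A := by rw [Matrix.nonsing_inv_mul _ hGdetu, Matrix.mul_one]
      have hAS : A * S = W := by
        rw [hAdef, Matrix.mul_assoc, hS'S, Matrix.mul_one]
      rw [hobj, hΘL, ← hWM A, hAS, hWtr]
  · -- upper bound
    rintro x ⟨Θ, hcon, hx⟩
    rw [hx, hobj Θ, ← hWM (Θ * L)]
    apply kyfan_le hr hrd M hM μ hμ σ hσ
    rw [← hACA, ← hconstr, hcon]
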